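/- Maximum rule for linear dominance: a function h : X → ℝ≥0 is linearly dominated by max(f, g) (pointwise maximum) if and only if h can be written as max(f', g') for some f' linearly dominated by f and g' linearly dominated by g. -/

import Mathlib

theorem linDom_maximum {X : Type*} (f g h : X → NNReal) :
    (∃ c : NNReal, 0 < c ∧ ∀ x, h x ≤ c * max (f x) (g x)) ↔
      ∃ f' g' : X → NNReal,
        (∃ c : NNReal, 0 < c ∧ ∀ x, f' x ≤ c * f x) ∧
        (∃ c : NNReal, 0 < c ∧ ∀ x, g' x ≤ c * g x) ∧
        h = fun x => max (f' x) (g' x) := by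
  constructor
  · rintro ⟨c, hc, hle⟩
    refine ⟨fun x => min (h x) (c * f x), fun x => min (h x) (c * g x),
      ⟨c, hc, fun x => min_le_right _ _⟩, ⟨c, hc, fun x => min_le_right _ _⟩, ?_⟩
    funext x
    rw [← min_max_distrib_left, ← mul_max_of_nonneg _ _ zero_le]
    exact (min_eq_left (hle x)).symm
  · rintro ⟨f', g', ⟨c1, hc1, h1⟩, ⟨c2, hc2, h2⟩, rfl⟩
    refine ⟨max c1 c2, lt_max_of_lt_left hc1, fun x => ?_⟩
    apply max_le
    · exact (h1 x).trans (mul_le_mul (le_max_left _ _) (le_max_left _ _) zero_le zero_le)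
    · exact (h2 x).trans (mul_le_mul (le_max_right _ _) (le_max_right _ _) zero_le zero_le)
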